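/- (Function extensionality, categorically) Let C be a locally cartesian closed category with finite products, and A, X objects. Let ev : A^X × X → A be the evaluation map, and let ev₁, ev₂ : A^X × A^X × X → A be the two evaluations. Form the pullback Q of ΔA : A → A × A along (ev₁, ev₂) : A^X × A^X × X → A × A, viewed as an object q over A^X × A^X × X. Let pr : A^X × A^X × X → A^X × A^X be the projection. Then there is a canonical isomorphism Δ(A^X) ≅ Π_pr(q) in C/(A^X × A^X). -/

import Mathlib

open CategoryTheory CategoryTheory.Limits MonoidalCategory CartesianMonoidalCategory CartesianClosed

attribute [local instance] BraidedCategory.ofCartesianMonoidalCategory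

universe v u

/-- Morphisms in an over category into an object whose structure map is a
monomorphism are unique. -/
lemma over_hom_ext_of_mono {C : Type u} [Category.{v} C] {B : C} {s t : Over B}
    (ht : Mono t.hom) (a b : s ⟶ t) : a = b := by
  ext
  have ha := Over.w a
  have hb := Over.w b
  exact (cancel_mono t.hom).mp (ha.trans hb.symm)

/-- Function extensionality, categorically: for objects `A X` of a locally cartesian
closed category, the diagonal of `A^X` is canonically isomorphic, in
`C/(A^X × A^X)`, to the dependent product along the projection
`pr : A^X × A^X × X ⟶ A^X × A^X` of the pullback `q` of `ΔA` along the double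
evaluation `(ev₁, ev₂) : A^X × A^X × X ⟶ A × A`. -/
theorem stmt10 {C : Type u} [Category.{v} C] [CartesianMonoidalCategory C]
    [HasPullbacks C] [MonoidalClosed C] (A X : C)
    (Ppr : Over (((X ⟹ A) ⊗ (X ⟹ A)) ⊗ X) ⥤ Over ((X ⟹ A) ⊗ (X ⟹ A)))
    (adj : Over.pullback
        (fst ((X ⟹ A) ⊗ (X ⟹ A)) X) ⊣ Ppr) :
    Nonempty (Over.mk (lift (𝟙 (X ⟹ A)) (𝟙 (X ⟹ A))) ≅
      Ppr.obj (Over.mk (pullback.snd (lift (𝟙 A) (𝟙 A))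
        (lift
          ((fst (X ⟹ A) (X ⟹ A)) ▷ X ≫ (β_ (X ⟹ A) X).hom ≫ (ihom.ev X).app A)
          ((snd (X ⟹ A) (X ⟹ A)) ▷ X ≫ (β_ (X ⟹ A) X).hom ≫ (ihom.ev X).app A))))) := by
  let E := X ⟹ A
  let pr : (E ⊗ E) ⊗ X ⟶ E ⊗ E := fst (E ⊗ E) X
  let ev' : E ⊗ X ⟶ A := (β_ E X).hom ≫ (ihom.ev X).app A
  let e₁ : (E ⊗ E) ⊗ X ⟶ A := (fst E E) ▷ X ≫ ev'
  let e₂ : (E ⊗ E) ⊗ X ⟶ A := (snd E E) ▷ X ≫ ev'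
  let e : (E ⊗ E) ⊗ X ⟶ A ⊗ A := lift e₁ e₂
  let ΔA : A ⟶ A ⊗ A := lift (𝟙 A) (𝟙 A)
  let Δ : Over (E ⊗ E) := Over.mk (lift (𝟙 E) (𝟙 E))
  let q : Over ((E ⊗ E) ⊗ X) := Over.mk (pullback.snd ΔA e)
  -- monomorphism facts
  have monoΔ : Mono Δ.hom := by
    refine ⟨fun {Z} g h hgh => ?_⟩
    have := hgh =≫ fst E E
    simpa [Δ] using this
  have monoΔA : Mono ΔA := by
    refine ⟨fun {Z} g h hgh => ?_⟩
    have := hgh =≫ fst A A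
    simpa [ΔA] using this
  have monoq : Mono q.hom := by
    show Mono (pullback.snd ΔA e)
    infer_instance
  -- forward construction
  have forward : ∀ {Z : Over (E ⊗ E)} (_ : Z ⟶ Δ),
      ((Over.pullback pr).obj Z ⟶ q) := by
    intro Z f
    have wf : f.left ≫ lift (𝟙 E) (𝟙 E) = Z.hom := Over.w f
    have hcond : pullback.fst Z.hom pr ≫ Z.hom = pullback.snd Z.hom pr ≫ fst (E ⊗ E) X :=
      pullback.condition
    have key : pullback.snd Z.hom pr ≫ (fst E E) ▷ X
        = pullback.snd Z.hom pr ≫ (snd E E) ▷ X := by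
      apply CartesianMonoidalCategory.hom_ext
      · simp only [Category.assoc, whiskerRight_fst]
        simp only [← Category.assoc]
        rw [← hcond, ← wf]
        simp
      · simp [whiskerRight_snd]
    have heq : pullback.snd Z.hom pr ≫ e₁ = pullback.snd Z.hom pr ≫ e₂ := by
      show pullback.snd Z.hom pr ≫ (fst E E) ▷ X ≫ ev'
        = pullback.snd Z.hom pr ≫ (snd E E) ▷ X ≫ ev'
      simpa only [Category.assoc] using key =≫ ev'
    have hcomm : (pullback.snd Z.hom pr ≫ e₁) ≫ ΔA = pullback.snd Z.hom pr ≫ e := by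
      apply CartesianMonoidalCategory.hom_ext
      · simp [ΔA, e]
      · simp [ΔA, e, heq]
    refine Over.homMk (pullback.lift (pullback.snd Z.hom pr ≫ e₁) (pullback.snd Z.hom pr) hcomm)
      ?_
    exact pullback.lift_snd _ _ _
  -- backward construction
  have backward : ∀ {Z : Over (E ⊗ E)} (_ : (Over.pullback pr).obj Z ⟶ q), (Z ⟶ Δ) := by
    intro Z g
    have wg : g.left ≫ pullback.snd ΔA e = pullback.snd Z.hom pr := Over.w g
    have heq : pullback.snd Z.hom pr ≫ e₁ = pullback.snd Z.hom pr ≫ e₂ := by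
      have h1 : pullback.snd Z.hom pr ≫ e = (g.left ≫ pullback.fst ΔA e) ≫ ΔA := by
        rw [Category.assoc, pullback.condition, ← Category.assoc, wg]
      have h2 := h1 =≫ fst A A
      have h3 := h1 =≫ snd A A
      simp only [Category.assoc, e, ΔA, lift_fst, lift_snd, Category.comp_id] at h2 h3
      rw [h2, h3]
    have hkcomm : fst Z.left X ≫ Z.hom = (Z.hom ▷ X) ≫ pr := by
      simp [pr]
    have hkπ₂ : pullback.lift (fst Z.left X) (Z.hom ▷ X) hkcomm ≫ pullback.snd Z.hom pr
        = Z.hom ▷ X := pullback.lift_snd _ _ _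
    have heq2 : (Z.hom ▷ X) ≫ e₁ = (Z.hom ▷ X) ≫ e₂ := by
      rw [← hkπ₂, Category.assoc, Category.assoc, heq]
    have huv : Z.hom ≫ fst E E = Z.hom ≫ snd E E := by
      apply MonoidalClosed.uncurry_injective
      rw [MonoidalClosed.uncurry_eq, MonoidalClosed.uncurry_eq]
      have hbu : ((Z.hom ≫ fst E E) ▷ X) ≫ ev'
          = (β_ Z.left X).hom ≫ X ◁ (Z.hom ≫ fst E E) ≫ (ihom.ev X).app A := by
        show ((Z.hom ≫ fst E E) ▷ X) ≫ (β_ E X).hom ≫ (ihom.ev X).app A = _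
        rw [← Category.assoc, BraidedCategory.braiding_naturality_left, Category.assoc]
      have hbv : ((Z.hom ≫ snd E E) ▷ X) ≫ ev'
          = (β_ Z.left X).hom ≫ X ◁ (Z.hom ≫ snd E E) ≫ (ihom.ev X).app A := by
        show ((Z.hom ≫ snd E E) ▷ X) ≫ (β_ E X).hom ≫ (ihom.ev X).app A = _
        rw [← Category.assoc, BraidedCategory.braiding_naturality_left, Category.assoc]
      have h1 : ((Z.hom ≫ fst E E) ▷ X) ≫ ev' = ((Z.hom ≫ snd E E) ▷ X) ≫ ev' := by
        rw [comp_whiskerRight, comp_whiskerRight, Category.assoc, Category.assoc]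
        exact heq2
      have h2 := hbu.symm.trans (h1.trans hbv)
      exact (cancel_epi (β_ Z.left X).hom).mp h2
    refine Over.homMk (Z.hom ≫ fst E E) ?_
    show (Z.hom ≫ fst E E) ≫ lift (𝟙 E) (𝟙 E) = Z.hom
    apply CartesianMonoidalCategory.hom_ext
    · simp
    · simpa using huv
  -- assemble the isomorphism via Yoneda
  refine ⟨Yoneda.ext Δ (Ppr.obj q)
    (fun {Z} f => (adj.homEquiv Z q) (forward f))
    (fun {Z} h => backward ((adj.homEquiv Z q).symm h))
    (fun {Z} f => over_hom_ext_of_mono monoΔ _ _)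
    (fun {Z} h => ?_)
    (fun {Z Z'} f g => ?_)⟩
  · show (adj.homEquiv Z q) (forward (backward ((adj.homEquiv Z q).symm h))) = h
    have e1 : forward (backward ((adj.homEquiv Z q).symm h)) = (adj.homEquiv Z q).symm h :=
      over_hom_ext_of_mono monoq _ _
    rw [e1, Equiv.apply_symm_apply]
  · show (adj.homEquiv Z' q) (forward (f ≫ g)) = f ≫ (adj.homEquiv Z q) (forward g)
    rw [← Adjunction.homEquiv_naturality_left adj f]
    exact congrArg (adj.homEquiv Z' q) (over_hom_ext_of_mono monoq _ _)
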